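/- Let Π = (δ, Σ, 𝒞) be an LCL problem for δ-regular rooted trees. In every good sequence (Σ^R_1, Σ^C_1, Σ^R_2, Σ^C_2, …, Σ^R_k) one has Σ ⊇ Σ^R_1 ⊇ Σ^C_1 ⊇ Σ^R_2 ⊇ Σ^C_2 ⊇ ⋯ ⊇ Σ^R_k. Moreover, if Π admits a good sequence of some length k ≥ |Σ| + 1, then Π admits a good sequence of length k′ for every positive integer k′. -/
import Mathlib


/-- `hasWalk E k u v`: there is a walk of length exactly `k` from `u` to `v` in the
directed graph with edge relation `E`. -/
def hasWalk {α : Type*} (E : α → α → Prop) : ℕ → α → α → Prop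
  | 0, u, v => u = v
  | k + 1, u, v => ∃ w, E u w ∧ hasWalk E k w v


/-- `rOk 𝒞 S i σ`: there is a correct labeling of the complete rooted tree `T_i`
whose root has label `σ` and all of whose labels lie in `S` (every node with
children must use a node configuration from `𝒞`). -/
def rOk {L : Type} (C : Set (L × Multiset L)) (S : Set L) : ℕ → L → Prop
  | 0, σ => σ ∈ S
  | i + 1, σ => σ ∈ S ∧ ∃ m : Multiset L, (σ, m) ∈ C ∧ ∀ a ∈ m, rOk C S i a

/-- `trim(Σ̃)` for rooted trees: labels `σ ∈ S` such that for every `i ≥ 1` there is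
a correct labeling of `T_i` with root label `σ` and all labels in `S`. -/
def trimR {L : Type} (C : Set (L × Multiset L)) (S : Set L) : Set L :=
  {σ | σ ∈ S ∧ ∀ i : ℕ, 1 ≤ i → rOk C S i σ}

/-- Edge `a → σ` of the path-form digraph of `Π` restricted to `S`. -/
def pathEdge {L : Type} (C : Set (L × Multiset L)) (S : Set L) (a σ : L) : Prop :=
  a ∈ S ∧ σ ∈ S ∧ ∃ m : Multiset L, (σ, m) ∈ C ∧ (∀ b ∈ m, b ∈ S) ∧ a ∈ m

/-- `σ` is path-flexible w.r.t. the path-form digraph of `Π` restricted to `S`. -/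
def pathFlex {L : Type} (C : Set (L × Multiset L)) (S : Set L) (σ : L) : Prop :=
  ∃ K : ℕ, ∀ k : ℕ, K ≤ k → hasWalk (pathEdge C S) k σ σ

/-- Reachability (by a walk of length `≥ 0`) in a directed graph. -/
def reaches {α : Type*} (E : α → α → Prop) (u v : α) : Prop :=
  ∃ k : ℕ, hasWalk E k u v

/-- `U` is a strongly connected component of the digraph with vertex set `Vs` and
edge relation `E`: any two vertices of `U` are connected by walks in both
directions, and `U` is maximal with this property. -/
def isSCC {α : Type*} (E : α → α → Prop) (Vs : Set α) (U : Set α) : Prop :=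
  U ⊆ Vs ∧ (∀ u ∈ U, ∀ v ∈ U, reaches E u v) ∧
    ∀ W : Set α, U ⊆ W → W ⊆ Vs → (∀ u ∈ W, ∀ v ∈ W, reaches E u v) → W = U

/-- `flexible-SCC(Σ̃)` for the rooted setting: path-flexible strongly connected
components of the path-form digraph of `Π` restricted to `Σ̃`. -/
def flexSCCR {L : Type} (C : Set (L × Multiset L)) (St : Set L) : Set (Set L) :=
  {U | isSCC (pathEdge C St) St U ∧ ∀ σ ∈ U, pathFlex C St σ}

/-- A good sequence `(Σ^R_1, Σ^C_1, Σ^R_2, Σ^C_2, …, Σ^R_k)` for an LCL problem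
`Π = (δ, Σ, 𝒞)` on `δ`-regular rooted trees. -/
def goodSeqR {L : Type} (C : Set (L × Multiset L)) (k : ℕ)
    (R Cs : ℕ → Set L) : Prop :=
  R 1 = trimR C (Set.univ : Set L) ∧
  (∀ i : ℕ, 1 ≤ i → i ≤ k - 1 → Cs i ∈ flexSCCR C (R i)) ∧
  (∀ i : ℕ, 2 ≤ i → i ≤ k → R i = trimR C (Cs (i - 1))) ∧
  (R k).Nonempty

lemma csSubR {L : Type} {C : Set (L × Multiset L)} {k : ℕ} {R Cs : ℕ → Set L}
    (hg : goodSeqR C k R Cs) : ∀ i : ℕ, 1 ≤ i → i ≤ k - 1 → Cs i ⊆ R i := by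
  intro i h1 h2
  exact (hg.2.1 i h1 h2).1.1

lemma rSubCs {L : Type} {C : Set (L × Multiset L)} {k : ℕ} {R Cs : ℕ → Set L}
    (hg : goodSeqR C k R Cs) : ∀ i : ℕ, 2 ≤ i → i ≤ k → R i ⊆ Cs (i - 1) := by
  intro i h1 h2
  rw [hg.2.2.1 i h1 h2]
  intro x hx
  exact hx.1

lemma rStep {L : Type} {C : Set (L × Multiset L)} {k : ℕ} {R Cs : ℕ → Set L}
    (hg : goodSeqR C k R Cs) : ∀ i : ℕ, 1 ≤ i → i + 1 ≤ k → R (i + 1) ⊆ R i := by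
  intro i h1 h2
  have h3 : R (i + 1) ⊆ Cs i := by
    have := rSubCs hg (i + 1) (by omega) h2
    simpa using this
  exact h3.trans (csSubR hg i h1 (by omega))

lemma rChain {L : Type} {C : Set (L × Multiset L)} {k : ℕ} {R Cs : ℕ → Set L}
    (hg : goodSeqR C k R Cs) : ∀ a b : ℕ, 1 ≤ a → a ≤ b → b ≤ k → R b ⊆ R a := by
  intro a b ha hab hbk
  induction b, hab using Nat.le_induction with
  | base => exact subset_rfl
  | succ b hb ih =>
    exact (rStep hg b (by omega) hbk).trans (ih (by omega))

/-- Good sequences for rooted trees are decreasing, and an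
extremely long good sequence yields good sequences of every length. -/
theorem stmt18 {L : Type} [Fintype L] [DecidableEq L]
    (δ : ℕ) (hδ : 1 ≤ δ) (C : Set (L × Multiset L))
    (hC : ∀ c ∈ C, Multiset.card c.2 = δ) :
    (∀ (k : ℕ) (R Cs : ℕ → Set L), 1 ≤ k → goodSeqR C k R Cs →
      R 1 ⊆ (Set.univ : Set L) ∧
      (∀ i : ℕ, 1 ≤ i → i ≤ k - 1 → Cs i ⊆ R i) ∧
      (∀ i : ℕ, 2 ≤ i → i ≤ k → R i ⊆ Cs (i - 1))) ∧
    ((∃ (k : ℕ) (R Cs : ℕ → Set L), Fintype.card L + 1 ≤ k ∧ goodSeqR C k R Cs) →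
      ∀ k' : ℕ, 1 ≤ k' → ∃ R Cs : ℕ → Set L, goodSeqR C k' R Cs) := by

  constructor
  · intro k R Cs hk hg
    refine ⟨Set.subset_univ _, csSubR hg, rSubCs hg⟩
  · rintro ⟨k, R, Cs, hk, hg⟩ k' hk'
    -- find a stationary index
    have hkL : Fintype.card L + 1 ≤ k := hk
    have hstab : ∃ i : ℕ, 1 ≤ i ∧ i + 1 ≤ k ∧ R i = R (i + 1) := by
      by_contra hcon
      push_neg at hcon
      have hstrict : ∀ j : ℕ, 1 ≤ j → j ≤ k → (R j).ncard + j ≤ (R 1).ncard + 1 := by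
        intro j h1 h2
        induction j, h1 using Nat.le_induction with
        | base => omega
        | succ j hj ih =>
          have hss : R (j + 1) ⊂ R j := by
            refine HasSubset.Subset.ssubset_of_ne (rStep hg j hj h2) ?_
            intro he
            exact hcon j hj h2 he.symm
          have hlt : (R (j + 1)).ncard < (R j).ncard :=
            Set.ncard_lt_ncard hss (Set.toFinite _)
          have := ih (by omega)
          omega
      have h1 : (R k).ncard + k ≤ (R 1).ncard + 1 := hstrict k (by omega) le_rfl
      have h2 : 1 ≤ (R k).ncard := by
        have := hg.2.2.2
        have := this.ncard_pos (Set.toFinite _)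
        omega
      have h3 : (R 1).ncard ≤ Fintype.card L := by
        have := Set.ncard_le_ncard (Set.subset_univ (R 1)) (Set.toFinite _)
        simpa [Set.ncard_univ, Nat.card_eq_fintype_card] using this
      omega
    obtain ⟨i, hi1, hik, hRi⟩ := hstab
    refine ⟨fun j => R (min j i), fun j => Cs (min j i), ?_, ?_, ?_, ?_⟩
    · show R (min 1 i) = trimR C Set.univ
      have : min 1 i = 1 := by omega
      rw [this]; exact hg.1
    · intro j hj1 hj2
      have hm1 : 1 ≤ min j i := by omega
      have hm2 : min j i ≤ k - 1 := by omega
      exact hg.2.1 (min j i) hm1 hm2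
    · intro j hj2 hjk
      show R (min j i) = trimR C (Cs (min (j-1) i))
      rcases le_or_gt j i with h | h
      · have e1 : min j i = j := by omega
        have e2 : min (j - 1) i = j - 1 := by omega
        rw [e1, e2]
        exact hg.2.2.1 j hj2 (by omega)
      · have e1 : min j i = i := by omega
        have e2 : min (j - 1) i = i := by omega
        rw [e1, e2, hRi]
        have := hg.2.2.1 (i + 1) (by omega) hik
        simpa using this
    · have hm1 : 1 ≤ min k' i := by omega
      have hm2 : min k' i ≤ k := by omega
      exact hg.2.2.2.mono (rChain hg (min k' i) k hm1 hm2 le_rfl)
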